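/- Let ab be an edge in a finite simplicial complex K and let γ_{ab}: K → K' be the edge contraction of ab. If ab satisfies the p-link condition in K, then the induced homomorphism γ_{ab*}: H_p(K) → H_p(K') on p-th simplicial homology with integer coefficients is injective. -/

import Mathlib

namespace ECpaper

variable {V : Type*} [LinearOrder V]

/-- A finite abstract simplicial complex on a (linearly ordered) vertex type `V`:
a finite collection of nonempty finite subsets of `V` such that every nonempty
subset of a member is a member. -/
structure SC (V : Type*) [LinearOrder V] where
  faces : Finset (Finset V)
  nonempty_of_mem : ∀ σ ∈ faces, σ.Nonempty
  down_closed : ∀ σ ∈ faces, ∀ τ ⊆ σ, τ.Nonempty → τ ∈ faces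

/-- The star of a set `X` of simplices: all simplices of `K` having some member
of `X` as a face. -/
def starOf (K : SC V) (X : Set (Finset V)) : Set (Finset V) :=
  {τ | τ ∈ K.faces ∧ ∃ σ ∈ X, σ ⊆ τ}

/-- The closure of a set `S` of simplices of `K`: all simplices of `S` together
with all of their faces. -/
def closureOf (K : SC V) (S : Set (Finset V)) : Set (Finset V) :=
  {τ | τ ∈ K.faces ∧ ∃ σ ∈ S, τ ⊆ σ}

/-- The link of a set `X` of simplices: the simplices in the closure of the star of `X`
that do not belong to the star of the closure of `X`. -/
def linkOf (K : SC V) (X : Set (Finset V)) : Set (Finset V) :=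
  closureOf K (starOf K X) \ starOf K (closureOf K X)

/-- The link of a vertex `a`. -/
def linkV (K : SC V) (a : V) : Set (Finset V) := linkOf K {{a}}

/-- The link of the edge `ab`. -/
def linkE (K : SC V) (a b : V) : Set (Finset V) := linkOf K {({a, b} : Finset V)}

/-- The link condition for the edge `ab` in `K`: `Lk a ∩ Lk b = Lk ab`. -/
def LinkCond (K : SC V) (a b : V) : Prop :=
  linkV K a ∩ linkV K b = linkE K a b

/-- The `p`-link condition for the edge `ab` in `K`: either `p ≤ 0`, or `p > 0` and every
`(p-1)`-simplex (i.e. simplex of cardinality `p`) of `Lk a ∩ Lk b` lies in `Lk ab`. -/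
def PLink (K : SC V) (a b : V) (p : ℤ) : Prop :=
  p ≤ 0 ∨ (0 < p ∧ ∀ ξ ∈ linkV K a ∩ linkV K b, (ξ.card : ℤ) = p → ξ ∈ linkE K a b)

/-- The dimension of a simplicial complex. -/
def dimSC (K : SC V) : ℤ := ((K.faces.sup Finset.card : ℕ) : ℤ) - 1

/-- The vertex map of the contraction of the edge `ab`: identity everywhere except
that `b` is sent to `a`. -/
def contr (a b : V) : V → V := fun v => if v = b then a else v

/-- The ambient module of simplicial chains (over all dimensions) with `ℤ` coefficients;
the basis element corresponding to a finset is that simplex with its vertices in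
increasing order. -/
abbrev FChain (V : Type*) [LinearOrder V] := Finset V →₀ ℤ

/-- The boundary of a single simplex (zero on vertices and on the empty set). -/
noncomputable def bndOf (σ : Finset V) : FChain V :=
  if σ.card ≤ 1 then 0
  else ∑ v ∈ σ, ((-1 : ℤ) ^ ((σ.filter (fun x => x < v)).card)) •
        Finsupp.single (σ.erase v) (1 : ℤ)

/-- The simplicial boundary operator. -/
noncomputable def bnd : FChain V →ₗ[ℤ] FChain V :=
  Finsupp.lsum ℤ fun σ => LinearMap.toSpanSingleton ℤ (FChain V) (bndOf σ)

/-- The group of `p`-chains of `K`: the span of the `p`-simplices of `K`. -/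
noncomputable def chains (K : SC V) (p : ℕ) : Submodule ℤ (FChain V) :=
  Submodule.span ℤ {x : FChain V | ∃ σ ∈ K.faces, σ.card = p + 1 ∧ x = Finsupp.single σ 1}

/-- The group of `p`-cycles of `K`. -/
noncomputable def cycles (K : SC V) (p : ℕ) : Submodule ℤ (FChain V) :=
  chains K p ⊓ LinearMap.ker bnd

/-- The group of `p`-boundaries of `K`. -/
noncomputable def bdries (K : SC V) (p : ℕ) : Submodule ℤ (FChain V) :=
  (chains K (p + 1)).map bnd

/-- The `p`-th simplicial homology group of `K` with integer coefficients. -/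
abbrev Hmlgy (K : SC V) (p : ℕ) : Type _ :=
  ↥(cycles K p) ⧸ ((bdries K p).comap (cycles K p).subtype)

/-- The homology class of a cycle. -/
noncomputable def HmlgyMk (K : SC V) (p : ℕ) (z : FChain V) (hz : z ∈ cycles K p) :
    Hmlgy K p :=
  Submodule.Quotient.mk ⟨z, hz⟩

/-- The number of inversions in a list. -/
def inversions : List V → ℕ
  | [] => 0
  | x :: xs => (xs.filter (fun y => decide (y < x))).length + inversions xs

/-- Value of the chain map induced by a vertex map `f` on a single simplex: zero if `f` is
not injective on the simplex, and otherwise the image simplex signed by the permutation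
rearranging the images of the vertices (in increasing order) into increasing order. -/
noncomputable def cmapOf (f : V → V) (σ : Finset V) : FChain V :=
  if (σ.image f).card = σ.card then
    ((-1 : ℤ) ^ inversions ((σ.sort (· ≤ ·)).map f)) • Finsupp.single (σ.image f) 1
  else 0

/-- The chain map induced by a vertex map `f`. -/
noncomputable def cmap (f : V → V) : FChain V →ₗ[ℤ] FChain V :=
  Finsupp.lsum ℤ fun σ => LinearMap.toSpanSingleton ℤ (FChain V) (cmapOf f σ)

/-- Relative `p`-cycles of the pair `(L, L0)`: `p`-chains of `L` whose boundary is a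
chain of `L0`. -/
noncomputable def relCycles (L L0 : SC V) (p : ℕ) : Submodule ℤ (FChain V) :=
  chains L p ⊓ Submodule.comap bnd (chains L0 (p - 1))

/-- Relative `p`-boundaries of the pair `(L, L0)`: boundaries of `(p+1)`-chains of `L`
together with `p`-chains of `L0`. -/
noncomputable def relBdries (L L0 : SC V) (p : ℕ) : Submodule ℤ (FChain V) :=
  (chains L (p + 1)).map bnd ⊔ chains L0 p

/-- The `p`-th relative simplicial homology group of the pair `(L, L0)` with
integer coefficients. -/
abbrev RelHmlgy (L L0 : SC V) (p : ℕ) : Type _ :=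
  ↥(relCycles L L0 p) ⧸ ((relBdries L L0 p).comap (relCycles L L0 p).subtype)

/-- The relative homology class of a relative cycle. -/
noncomputable def RelHmlgyMk (L L0 : SC V) (p : ℕ) (z : FChain V)
    (hz : z ∈ relCycles L L0 p) : RelHmlgy L L0 p :=
  Submodule.Quotient.mk ⟨z, hz⟩

/-- A pure simplicial complex of dimension `p`: it is formed by a (nonempty) collection of
`p`-simplices and all their proper faces. -/
def IsPure (L : SC V) (p : ℕ) : Prop :=
  (∀ σ ∈ L.faces, ∃ τ ∈ L.faces, σ ⊆ τ ∧ τ.card = p + 1) ∧ ∃ σ ∈ L.faces, σ.card = p + 1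

/-- An orientation of a complex: a choice of sign (`1` if the chosen orientation of the simplex
is the increasing order of the vertices, `-1` if the opposite) for each simplex. -/
def IsOrientation (K : SC V) (o : Finset V → ℤ) : Prop :=
  ∀ σ ∈ K.faces, o σ = 1 ∨ o σ = -1

/-- Incidence sign (with respect to increasing vertex order) between a codimension-one
face `σ` and a simplex `τ`: `(-1)^i` where `i` is the position in `τ` of the vertex
missing in `σ`. -/
def incSign (σ τ : Finset V) : ℤ :=
  ∏ v ∈ τ \ σ, (-1 : ℤ) ^ ((τ.filter (fun x => x < v)).card)

/-- An edge of the graph `G_q(K)`: a pair of a `(q-1)`-simplex and an incident `q`-simplex. -/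
def IsGEdge (K : SC V) (q : ℕ) (e : Finset V × Finset V) : Prop :=
  e.1 ∈ K.faces ∧ e.2 ∈ K.faces ∧ e.1.card = q ∧ e.2.card = q + 1 ∧ e.1 ⊆ e.2

/-- A circuit of the graph `G_q(K)`: a set of edges of `G_q(K)` in which every vertex of the
graph has even degree. -/
def IsCircuit (K : SC V) (q : ℕ) (C : Finset (Finset V × Finset V)) : Prop :=
  (∀ e ∈ C, IsGEdge K q e) ∧
  ∀ ρ : Finset V,
    Even ((C.filter (fun e => e.1 = ρ)).card + (C.filter (fun e => e.2 = ρ)).card)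

/-- Weight of an edge of `G_q(K)` under the orientation `o`. -/
def edgeWeight (o : Finset V → ℤ) (e : Finset V × Finset V) : ℤ :=
  o e.1 * o e.2 * incSign e.1 e.2

/-- Total weight of a circuit under the orientation `o`. -/
def circWeight (o : Finset V → ℤ) (C : Finset (Finset V × Finset V)) : ℤ :=
  ∑ e ∈ C, edgeWeight o e

/-- A circuit is b-even if the sum of its edge weights is `0 mod 4`. -/
def BEven (o : Finset V → ℤ) (C : Finset (Finset V × Finset V)) : Prop :=
  circWeight o C % 4 = 0

/-- A circuit is b-odd if the sum of its edge weights is `2 mod 4`. -/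
def BOdd (o : Finset V → ℤ) (C : Finset (Finset V × Finset V)) : Prop :=
  circWeight o C % 4 = 2

/-- A circuit `C` of `G_q(K)` has a chord: an edge of the graph not in `C` both of whose
endpoints are vertices of `C`. -/
def HasChord (K : SC V) (q : ℕ) (C : Finset (Finset V × Finset V)) : Prop :=
  ∃ e : Finset V × Finset V, IsGEdge K q e ∧ e ∉ C ∧
    (∃ c ∈ C, c.1 = e.1) ∧ (∃ c ∈ C, c.2 = e.2)

/-- The boundary matrix `[∂_{p+1}]` of an oriented complex: rows indexed by `p`-simplices,
columns by `(p+1)`-simplices, entries the signed incidence numbers. -/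
def boundaryMatrixSucc (K : SC V) (o : Finset V → ℤ) (p : ℕ) :
    Matrix {σ : Finset V // σ ∈ K.faces ∧ σ.card = p + 1}
      {τ : Finset V // τ ∈ K.faces ∧ τ.card = p + 2} ℤ :=
  fun σ τ => if σ.1 ⊆ τ.1 then edgeWeight o (σ.1, τ.1) else 0

/-- `σ` is a collapsing simplex (w.r.t. contraction of `ab`). -/
def IsCollapsing (a b : V) (σ : Finset V) : Prop := a ∈ σ ∧ b ∈ σ

/-- `σ` and `σ'` are mirror simplices (w.r.t. contraction of `ab`). -/
def IsMirror (a b : V) (σ σ' : Finset V) : Prop :=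
  a ∈ σ ∧ b ∈ σ' ∧ σ = insert a (σ'.erase b)

/-- The circuit `C` of `G_{p+1}(K)` contains (an edge incident to) a collapsing `p`-vertex. -/
def ContainsCollapsingLow (a b : V) (C : Finset (Finset V × Finset V)) : Prop :=
  ∃ e ∈ C, IsCollapsing a b e.1

/-- The circuit `C` of `G_{p+1}(K)` contains a pair of `(p+1)`-vertices that are mirrors of
each other. -/
def ContainsMirrorHigh (a b : V) (C : Finset (Finset V × Finset V)) : Prop :=
  ∃ e ∈ C, ∃ e' ∈ C, IsMirror a b e.2 e'.2


-- AUX START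
section Aux

variable {a b : V}

lemma negpow_congr {n m : ℕ} (h : n % 2 = m % 2) : (-1:ℤ)^n = (-1:ℤ)^m := by
  conv_lhs => rw [← Nat.div_add_mod n 2]
  conv_rhs => rw [← Nat.div_add_mod m 2]
  rw [pow_add, pow_add, pow_mul, pow_mul]
  norm_num [h]

lemma contr_b : contr a b b = a := by simp [contr]

lemma contr_ne {v : V} (h : v ≠ b) : contr a b v = v := by simp [contr, h]

lemma image_contr_of_not_mem {σ : Finset V} (h : b ∉ σ) :
    σ.image (contr a b) = σ := by
  rw [Finset.image_congr (g := id)]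
  · exact Finset.image_id
  · intro x hx
    exact contr_ne (by rintro rfl; exact h hx)

lemma image_contr_of_mem {σ : Finset V} (h : b ∈ σ) :
    σ.image (contr a b) = insert a (σ.erase b) := by
  conv_lhs => rw [← Finset.insert_erase h]
  rw [Finset.image_insert, contr_b,
    image_contr_of_not_mem (Finset.notMem_erase _ _)]

lemma inversions_cons (x : V) (xs : List V) :
    inversions (x :: xs) = (xs.filter (fun y => decide (y < x))).length + inversions xs := rfl

lemma inversions_sorted {l : List V} (h : l.Pairwise (· ≤ ·)) : inversions l = 0 := by
  induction l with
  | nil => rfl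
  | cons x xs ih =>
    rw [inversions_cons]
    rw [List.pairwise_cons] at h
    have hf : xs.filter (fun y => decide (y < x)) = [] := by
      rw [List.filter_eq_nil_iff]
      intro y hy
      simpa using not_lt.2 (h.1 y hy)
    rw [hf, ih h.2]
    simp

lemma filter_eq_singleton {l : List V} (hnd : l.Nodup) {c : V} (hc : c ∈ l) :
    (l.filter (fun z => decide (z = c))).length = 1 := by
  induction l with
  | nil => simp at hc
  | cons y ys ih =>
    rw [List.nodup_cons] at hnd
    rw [List.filter_cons]
    by_cases hyc : y = c
    · rw [if_pos (by simp [hyc])]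
      have h0 : ys.filter (fun z => decide (z = c)) = [] := by
        rw [List.filter_eq_nil_iff]
        intro z hz
        simp only [decide_eq_true_eq]
        rintro rfl
        exact hnd.1 (hyc ▸ hz)
      simp [h0]
    · rw [if_neg (by simp [hyc])]
      refine ih hnd.2 ?_
      rcases List.mem_cons.1 hc with h | h
      · exact absurd h.symm hyc
      · exact h

lemma inversions_map_contr (hne : a ≠ b) {l : List V}
    (hs : l.Pairwise (· < ·)) (ha : a ∉ l) (hb : b ∈ l) :
    inversions (l.map (contr a b)) =
      (l.filter (fun y => decide (min a b < y ∧ y < max a b))).length := by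
  induction l with
  | nil => simp at hb
  | cons x xs ih =>
    rw [List.pairwise_cons] at hs
    have hax : a ∉ xs := fun h => ha (List.mem_cons_of_mem _ h)
    rw [List.map_cons, inversions_cons, List.filter_cons]
    by_cases hxb : x = b
    · subst hxb
      have hbxs : x ∉ xs := fun h => lt_irrefl x (hs.1 x h)
      have hmap : xs.map (contr a x) = xs := by
        conv_rhs => rw [← List.map_id xs]
        exact List.map_congr_left (fun y hy => contr_ne (fun h => hbxs (h ▸ hy)))
      rw [contr_b, hmap, inversions_sorted (hs.2.imp le_of_lt)]
      have hbno : ¬ (min a x < x ∧ x < max a x) := by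
        rcases lt_or_gt_of_ne hne with h | h
        · simp [max_eq_right h.le]
        · simp [min_eq_right h.le]
      rw [if_neg (by simpa using hbno)]
      rcases lt_or_gt_of_ne hne with hab | hab
      · have h1 : xs.filter (fun y => decide (y < a)) = [] := by
          rw [List.filter_eq_nil_iff]; intro y hy
          simp only [decide_eq_true_eq, not_lt]
          exact hab.le.trans (hs.1 y hy).le
        have h2 : xs.filter (fun y => decide (min a x < y ∧ y < max a x)) = [] := by
          rw [List.filter_eq_nil_iff]; intro y hy
          simp only [min_eq_left hab.le, max_eq_right hab.le, decide_eq_true_eq, not_and, not_lt]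
          exact fun _ => (hs.1 y hy).le
        rw [h1, h2]
        simp
      · have heq : ∀ y ∈ xs, (decide (y < a) = decide (min a x < y ∧ y < max a x)) := by
          intro y hy
          have hxy : x < y := hs.1 y hy
          simp only [min_eq_right hab.le, max_eq_left hab.le]
          by_cases h : y < a <;> simp [h, hxy]
        rw [List.filter_congr heq]
        simp
    · have hxa : x ≠ a := fun h => ha (h ▸ List.mem_cons_self (a := x) (l := xs))
      have hbxs : b ∈ xs := by
        rcases List.mem_cons.1 hb with h | h
        · exact absurd h.symm hxb
        · exact h
      have hxltb : x < b := hs.1 b hbxs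
      rw [contr_ne hxb, ih hs.2 hax hbxs]
      have hlen : ((xs.map (contr a b)).filter (fun y => decide (y < x))).length
          = if a < x then 1 else 0 := by
        rw [List.filter_map, List.length_map]
        have h1 : xs.filter ((fun y => decide (y < x)) ∘ (contr a b))
            = xs.filter (fun z => decide (z = b ∧ a < x)) := by
          apply List.filter_congr
          intro z hz
          simp only [Function.comp]
          by_cases hzb : z = b
          · subst hzb; simp [contr_b]
          · rw [contr_ne hzb]
            simp [not_lt.2 (hs.1 z hz).le, hzb]
        rw [h1]
        split_ifs with hax2
        · have h2 : xs.filter (fun z => decide (z = b ∧ a < x))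
              = xs.filter (fun z => decide (z = b)) := by
            apply List.filter_congr
            intro z hz
            simp [hax2]
          rw [h2]
          exact filter_eq_singleton (hs.2.imp ne_of_lt) hbxs
        · have h2 : xs.filter (fun z => decide (z = b ∧ a < x)) = [] := by
            rw [List.filter_eq_nil_iff]
            intro z hz
            simp [hax2]
          rw [h2]
          rfl
      rw [hlen]
      have hiff : a < x ↔ (min a b < x ∧ x < max a b) := by
        rcases lt_or_gt_of_ne hne with hab | hab
        · simp [min_eq_left hab.le, max_eq_right hab.le, hxltb]
        · constructor
          · intro h; exact absurd hxltb (not_lt.2 (hab.le.trans h.le))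
          · rintro ⟨h, -⟩
            rw [min_eq_right hab.le] at h
            exact absurd hxltb (not_lt.2 h.le)
      by_cases hax2 : a < x
      · rw [if_pos hax2, if_pos (by simpa using hiff.1 hax2)]
        simp [Nat.add_comm]
      · rw [if_neg hax2, if_neg (by simpa using fun h => hax2 (hiff.2 h))]
        simp


/-- number of elements of `σ` strictly between `a` and `b`. -/
def bcount (a b : V) (σ : Finset V) : ℕ :=
  (σ.filter (fun x => min a b < x ∧ x < max a b)).card

lemma filter_length_sort (σ : Finset V) (p : V → Prop) [DecidablePred p] :
    ((σ.sort (·≤·)).filter (fun y => decide (p y))).length = (σ.filter p).card := by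
  rw [((Finset.sort_perm_toList σ (·≤·)).filter (fun y => decide (p y))).length_eq]
  rw [← Multiset.coe_card, ← Multiset.filter_coe p, Finset.coe_toList, ← Finset.filter_val,
    Finset.card_def]

lemma bndOf_card_le {σ : Finset V} (h : σ.card ≤ 1) : bndOf σ = 0 := if_pos h

lemma bndOf_eq {σ : Finset V} (h : 2 ≤ σ.card) :
    bndOf σ = ∑ v ∈ σ, ((-1 : ℤ) ^ ((σ.filter (fun x => x < v)).card)) •
        Finsupp.single (σ.erase v) (1 : ℤ) := if_neg (by omega)

lemma bnd_single (σ : Finset V) (c : ℤ) : bnd (Finsupp.single σ c) = c • bndOf σ := by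
  rw [bnd, Finsupp.lsum_single, LinearMap.toSpanSingleton_apply]

lemma cmap_single (f : V → V) (σ : Finset V) (c : ℤ) :
    cmap f (Finsupp.single σ c) = c • cmapOf f σ := by
  rw [cmap, Finsupp.lsum_single, LinearMap.toSpanSingleton_apply]

lemma cmapOf_contr_not_mem {σ : Finset V} (hb : b ∉ σ) :
    cmapOf (contr a b) σ = Finsupp.single σ 1 := by
  have himg : σ.image (contr a b) = σ := image_contr_of_not_mem hb
  rw [cmapOf, if_pos (by rw [himg]), himg]
  have hmap : (σ.sort (·≤·)).map (contr a b) = σ.sort (·≤·) := by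
    conv_rhs => rw [← List.map_id (σ.sort (·≤·))]
    refine List.map_congr_left (fun y hy => contr_ne ?_)
    rintro rfl
    exact hb ((Finset.mem_sort _).1 hy)
  rw [hmap, inversions_sorted (Finset.pairwise_sort _ _), pow_zero, one_smul]

lemma cmapOf_contr_both (hne : a ≠ b) {σ : Finset V} (ha : a ∈ σ) (hb : b ∈ σ) :
    cmapOf (contr a b) σ = 0 := by
  rw [cmapOf, if_neg]
  rw [image_contr_of_mem hb]
  have h1 : a ∈ σ.erase b := Finset.mem_erase.2 ⟨hne, ha⟩
  rw [Finset.insert_eq_self.2 h1, Finset.card_erase_of_mem hb]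
  have : 0 < σ.card := Finset.card_pos.2 ⟨b, hb⟩
  omega

lemma cmapOf_contr_mirror (hne : a ≠ b) {σ : Finset V} (ha : a ∉ σ) (hb : b ∈ σ) :
    cmapOf (contr a b) σ
      = ((-1 : ℤ) ^ (bcount a b σ)) • Finsupp.single (insert a (σ.erase b)) 1 := by
  have himg : σ.image (contr a b) = insert a (σ.erase b) := image_contr_of_mem hb
  have hcard : (insert a (σ.erase b)).card = σ.card := by
    rw [Finset.card_insert_of_notMem (fun h => ha (Finset.mem_of_mem_erase h)),
      Finset.card_erase_of_mem hb]
    have : 0 < σ.card := Finset.card_pos.2 ⟨b, hb⟩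
    omega
  rw [cmapOf, if_pos (by rw [himg, hcard]), himg]
  congr 2
  rw [inversions_map_contr hne (Finset.sortedLT_sort σ).pairwise
    (by simpa using ha) (by simpa using hb)]
  exact filter_length_sort σ (fun y => min a b < y ∧ y < max a b)

lemma erase_comm' (s : Finset V) (x y : V) : (s.erase x).erase y = (s.erase y).erase x := by
  ext z
  simp only [Finset.mem_erase]
  tauto

lemma filter_card_insert (p : V → Prop) [DecidablePred p] {c : V} {t : Finset V} (h : c ∉ t) :
    ((insert c t).filter p).card = (t.filter p).card + if p c then 1 else 0 := by
  rw [Finset.filter_insert]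
  split_ifs with h1
  · rw [Finset.card_insert_of_notMem (fun hc => h (Finset.mem_of_mem_filter _ hc))]
  · omega

lemma filter_card_erase (p : V → Prop) [DecidablePred p] {c : V} {t : Finset V} (h : c ∈ t) :
    (t.filter p).card = ((t.erase c).filter p).card + if p c then 1 else 0 := by
  conv_lhs => rw [← Finset.insert_erase h]
  exact filter_card_insert p (Finset.notMem_erase c t)

lemma count_parity (hne : a ≠ b) {t : Finset V} (hat : a ∉ t) (hbt : b ∉ t) :
    ((t.filter (fun x => x < a)).card + (t.filter (fun x => x < b)).card) % 2
      = (bcount a b t) % 2 := by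
  have key := Finset.card_union_add_card_inter (t.filter (fun x => x < a))
    (t.filter (fun x => x < b))
  have hu : t.filter (fun x => x < a) ∪ t.filter (fun x => x < b)
      = t.filter (fun x => x < max a b) := by
    rw [← Finset.filter_or]
    exact Finset.filter_congr (fun x _ => (lt_max_iff).symm)
  have hi : t.filter (fun x => x < a) ∩ t.filter (fun x => x < b)
      = t.filter (fun x => x < min a b) := by
    rw [← Finset.filter_and]
    exact Finset.filter_congr (fun x _ => (lt_min_iff).symm)
  have hminmem : min a b ∉ t := by
    rcases min_choice a b with h | h <;> rw [h] <;> assumption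
  have hsplit : (t.filter (fun x => x < max a b)).card
      = (t.filter (fun x => x < min a b)).card + bcount a b t := by
    have hdecomp : t.filter (fun x => x < max a b)
        = t.filter (fun x => x < min a b) ∪ t.filter (fun x => min a b < x ∧ x < max a b) := by
      rw [← Finset.filter_or]
      apply Finset.filter_congr
      intro x hx
      constructor
      · intro hxm
        rcases lt_trichotomy x (min a b) with h | h | h
        · exact Or.inl h
        · exact absurd (h ▸ hx) hminmem
        · exact Or.inr ⟨h, hxm⟩
      · rintro (h | ⟨-, h2⟩)
        · exact h.trans_le (min_le_max)
        · exact h2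
    rw [hdecomp, Finset.card_union_of_disjoint, bcount]
    rw [Finset.disjoint_left]
    intro x h1 h2
    exact absurd (Finset.mem_filter.1 h2).2.1 (not_lt.2 (Finset.mem_filter.1 h1).2.le)
  rw [hu, hi] at key
  omega

lemma betw_parity {v : V} (hne : a ≠ b) (hva : v ≠ a) (hvb : v ≠ b) :
    ((if min a b < v ∧ v < max a b then 1 else 0) + (if a < v then 1 else 0)) % 2
      = (if b < v then 1 else 0) % 2 := by
  rcases lt_or_gt_of_ne hne with h | h
  · rw [min_eq_left h.le, max_eq_right h.le]
    rcases hva.lt_or_gt with hv1 | hv1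
    · have h2 : ¬ a < v := not_lt.2 hv1.le
      have h3 : ¬ b < v := not_lt.2 (hv1.le.trans h.le)
      simp [h2, h3]
    · rcases hvb.lt_or_gt with hv2 | hv2
      · have h3 : ¬ b < v := not_lt.2 hv2.le
        simp [hv1, hv2, h3]
      · have h3 : ¬ v < b := not_lt.2 hv2.le
        simp [hv1, hv2, h3]
  · rw [min_eq_right h.le, max_eq_left h.le]
    rcases hvb.lt_or_gt with hv1 | hv1
    · have h2 : ¬ b < v := not_lt.2 hv1.le
      have h3 : ¬ a < v := not_lt.2 (hv1.le.trans h.le)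
      simp [h2, h3, hv1]
    · rcases hva.lt_or_gt with hv2 | hv2
      · have h3 : ¬ a < v := not_lt.2 hv2.le
        simp [hv1, hv2, h3]
      · have h3 : ¬ v < a := not_lt.2 hv2.le
        simp [hv1, hv2, h3]

lemma not_betw_self_left : ¬ (min a b < a ∧ a < max a b) := by
  rcases le_total a b with h | h
  · rw [min_eq_left h]; simp
  · rw [max_eq_left h]; simp

lemma not_betw_self_right : ¬ (min a b < b ∧ b < max a b) := by
  rcases le_total a b with h | h
  · rw [max_eq_right h]; simp
  · rw [min_eq_right h]; simp

lemma sign_both (hne : a ≠ b) {σ : Finset V} (ha : a ∈ σ) (hb : b ∈ σ) :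
    (-1:ℤ)^((σ.filter (fun x => x < a)).card) * (-1)^((σ.filter (fun x => x < b)).card)
      = -(-1)^(bcount a b σ) := by
  have hba : b ∈ σ.erase a := Finset.mem_erase.2 ⟨hne.symm, hb⟩
  have hat : a ∉ (σ.erase a).erase b := fun h =>
    Finset.notMem_erase a σ (Finset.mem_of_mem_erase h)
  have hbt : b ∉ (σ.erase a).erase b := Finset.notMem_erase _ _
  have e1 : (σ.filter (fun x => x < a)).card
      = (((σ.erase a).erase b).filter (fun x => x < a)).card + (if b < a then 1 else 0) := by
    rw [filter_card_erase (fun x => x < a) ha]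
    rw [filter_card_erase (fun x => x < a) hba]
    simp [lt_irrefl]
  have e2 : (σ.filter (fun x => x < b)).card
      = (((σ.erase a).erase b).filter (fun x => x < b)).card + (if a < b then 1 else 0) := by
    rw [filter_card_erase (fun x => x < b) hb]
    have hab' : a ∈ σ.erase b := Finset.mem_erase.2 ⟨hne, ha⟩
    rw [filter_card_erase (fun x => x < b) hab', erase_comm']
    simp [lt_irrefl]
  have e3 : bcount a b σ = bcount a b ((σ.erase a).erase b) := by
    rw [bcount, filter_card_erase _ ha, if_neg not_betw_self_left,
      bcount, filter_card_erase _ hba, if_neg not_betw_self_right]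
    rfl
  have hM := count_parity hne hat hbt
  have hind : (if b < a then 1 else 0) + (if a < b then 1 else 0) = 1 := by
    rcases lt_or_gt_of_ne hne with h | h
    · simp [h, not_lt.2 h.le]
    · simp [h, not_lt.2 h.le]
  rw [← pow_add]
  have hpar : ((σ.filter (fun x => x < a)).card + (σ.filter (fun x => x < b)).card) % 2
      = (1 + bcount a b σ) % 2 := by
    rw [e1, e2, e3]
    omega
  rw [negpow_congr hpar, pow_add, pow_one]
  ring

lemma sign_mirror_a (hne : a ≠ b) {σ : Finset V} (ha : a ∉ σ) (hb : b ∈ σ) :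
    (-1:ℤ)^(bcount a b σ) * (-1)^(((insert a (σ.erase b)).filter (fun x => x < a)).card)
      = (-1)^((σ.filter (fun x => x < b)).card) := by
  have hat : a ∉ σ.erase b := fun h => ha (Finset.mem_of_mem_erase h)
  have hbt : b ∉ σ.erase b := Finset.notMem_erase _ _
  have e1 : ((insert a (σ.erase b)).filter (fun x => x < a)).card
      = ((σ.erase b).filter (fun x => x < a)).card := by
    rw [filter_card_insert _ hat]
    simp [lt_irrefl]
  have e2 : (σ.filter (fun x => x < b)).card
      = ((σ.erase b).filter (fun x => x < b)).card := by
    rw [filter_card_erase (fun x => x < b) hb]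
    simp [lt_irrefl]
  have e3 : bcount a b σ = bcount a b (σ.erase b) := by
    rw [bcount, filter_card_erase _ hb, if_neg not_betw_self_right]
    rfl
  have hM := count_parity hne hat hbt
  rw [← pow_add]
  apply negpow_congr
  rw [e1, e2, e3]
  omega

lemma sign_mirror_v (hne : a ≠ b) {σ : Finset V} (ha : a ∉ σ) (hb : b ∈ σ)
    {v : V} (hv : v ∈ σ) (hvb : v ≠ b) :
    (-1:ℤ)^(bcount a b σ) * (-1)^(((insert a (σ.erase b)).filter (fun x => x < v)).card)
      = (-1)^((σ.filter (fun x => x < v)).card) * (-1)^(bcount a b (σ.erase v)) := by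
  have hva : v ≠ a := fun h => ha (h ▸ hv)
  have hat : a ∉ σ.erase b := fun h => ha (Finset.mem_of_mem_erase h)
  have e1 : ((insert a (σ.erase b)).filter (fun x => x < v)).card
      = ((σ.erase b).filter (fun x => x < v)).card + (if a < v then 1 else 0) := by
    rw [filter_card_insert _ hat]
  have e2 : (σ.filter (fun x => x < v)).card
      = ((σ.erase b).filter (fun x => x < v)).card + (if b < v then 1 else 0) := by
    rw [filter_card_erase (fun x => x < v) hb]
  have e3 : bcount a b σ = bcount a b (σ.erase v)
      + (if min a b < v ∧ v < max a b then 1 else 0) := by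
    rw [bcount, filter_card_erase _ hv]
    rfl
  have hO := betw_parity (a := a) (b := b) hne hva hvb
  rw [← pow_add, ← pow_add]
  apply negpow_congr
  rw [e1, e2, e3]
  omega


lemma negpow_mul_self (n : ℕ) : ((-1:ℤ)^n) * ((-1:ℤ)^n) = 1 := by
  rw [← pow_add, negpow_congr (show (n+n) % 2 = 0 % 2 by omega), pow_zero]

lemma bnd_bndOf (σ : Finset V) : bnd (bndOf σ) = 0 := by
  by_cases h1 : σ.card ≤ 1
  · rw [bndOf_card_le h1, map_zero]
  push_neg at h1
  have hsum : bnd (bndOf σ)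
      = ∑ v ∈ σ, ((-1:ℤ) ^ ((σ.filter (fun x => x < v)).card)) • bndOf (σ.erase v) := by
    rw [bndOf_eq h1, map_sum]
    refine Finset.sum_congr rfl fun v hv => ?_
    rw [map_smul, bnd_single, one_smul]
  rw [hsum]
  by_cases h2 : σ.card = 2
  · refine Finset.sum_eq_zero fun v hv => ?_
    rw [bndOf_card_le (by rw [Finset.card_erase_of_mem hv]; omega), smul_zero]
  · have h3 : 2 ≤ σ.card - 1 := by omega
    have hstep : ∀ v ∈ σ, ((-1:ℤ) ^ ((σ.filter (fun x => x < v)).card)) • bndOf (σ.erase v)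
        = ∑ w ∈ σ.erase v,
            (((-1:ℤ) ^ ((σ.filter (fun x => x < v)).card))
              * ((-1:ℤ) ^ (((σ.erase v).filter (fun x => x < w)).card)))
            • Finsupp.single ((σ.erase v).erase w) (1:ℤ) := by
      intro v hv
      rw [bndOf_eq (by rw [Finset.card_erase_of_mem hv]; omega), Finset.smul_sum]
      refine Finset.sum_congr rfl fun w hw => ?_
      rw [smul_smul]
    rw [Finset.sum_congr rfl hstep]
    rw [Finset.sum_sigma']
    refine Finset.sum_involution (fun p _ => ⟨p.2, p.1⟩) ?_ ?_ ?_ ?_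
    · rintro ⟨v, w⟩ hp
      simp only [Finset.mem_sigma, Finset.mem_erase] at hp
      obtain ⟨hv, hwv, hw⟩ := hp
      have hsw : ((σ.erase w).erase v) = ((σ.erase v).erase w) := erase_comm' σ w v
      simp only [hsw]
      rw [← add_smul]
      have keyv : (σ.filter (fun x => x < w)).card
          = ((σ.erase v).filter (fun x => x < w)).card + (if v < w then 1 else 0) :=
        filter_card_erase _ hv
      have keyw : (σ.filter (fun x => x < v)).card
          = ((σ.erase w).filter (fun x => x < v)).card + (if w < v then 1 else 0) :=
        filter_card_erase _ hw
      have hind : (if v < w then 1 else 0) + (if w < v then 1 else 0) = 1 := by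
        rcases lt_or_gt_of_ne hwv with h | h
        · simp [h, not_lt.2 h.le]
        · simp [h, not_lt.2 h.le]
      set e1 := (σ.filter (fun x => x < v)).card
      set e2 := ((σ.erase v).filter (fun x => x < w)).card
      set e3 := (σ.filter (fun x => x < w)).card
      set e4 := ((σ.erase w).filter (fun x => x < v)).card
      have hpar : (e1 + e2 + (e3 + e4)) % 2 = 1 % 2 := by omega
      have hzero : ((-1:ℤ)^e1 * (-1:ℤ)^e2) + ((-1:ℤ)^e3 * (-1:ℤ)^e4) = 0 := by
        have hprod : ((-1:ℤ)^e1 * (-1:ℤ)^e2) * ((-1:ℤ)^e3 * (-1:ℤ)^e4) = -1 := by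
          rw [← pow_add, ← pow_add, ← pow_add, negpow_congr hpar, pow_one]
        have hsq : ((-1:ℤ)^e3 * (-1:ℤ)^e4) * ((-1:ℤ)^e3 * (-1:ℤ)^e4) = 1 := by
          calc ((-1:ℤ)^e3 * (-1:ℤ)^e4) * ((-1:ℤ)^e3 * (-1:ℤ)^e4)
              = ((-1:ℤ)^e3 * (-1:ℤ)^e3) * ((-1:ℤ)^e4 * (-1:ℤ)^e4) := by ring
            _ = 1 := by rw [negpow_mul_self, negpow_mul_self, one_mul]
        linear_combination ((-1:ℤ)^e3 * (-1:ℤ)^e4) * hprod - ((-1:ℤ)^e1 * (-1:ℤ)^e2) * hsq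
      rw [hzero, zero_smul]
    · rintro ⟨v, w⟩ hp -
      simp only [Finset.mem_sigma, Finset.mem_erase] at hp
      intro hcontra
      have : w = v := congrArg Sigma.fst hcontra
      exact hp.2.1 this
    · rintro ⟨v, w⟩ hp
      simp only [Finset.mem_sigma, Finset.mem_erase] at hp ⊢
      exact ⟨hp.2.2, hp.2.1.symm, hp.1⟩
    · rintro ⟨v, w⟩ hp
      rfl

lemma bnd_bnd (x : FChain V) : bnd (bnd x) = 0 := by
  induction x using Finsupp.induction_linear with
  | zero => simp
  | add f g hf hg => rw [map_add, map_add, hf, hg, add_zero]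
  | single σ c => rw [bnd_single, map_smul, bnd_bndOf, smul_zero]

lemma bnd_cmapOf (hne : a ≠ b) (σ : Finset V) :
    bnd (cmapOf (contr a b) σ) = cmap (contr a b) (bndOf σ) := by
  by_cases h1 : σ.card ≤ 1
  · rw [bndOf_card_le h1, map_zero]
    by_cases hb : b ∈ σ
    · by_cases ha : a ∈ σ
      · rw [cmapOf_contr_both hne ha hb, map_zero]
      · rw [cmapOf_contr_mirror hne ha hb, map_smul, bnd_single, one_smul,
          bndOf_card_le, smul_zero]
        rw [Finset.card_insert_of_notMem (fun h => ha (Finset.mem_of_mem_erase h)),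
          Finset.card_erase_of_mem hb]
        have : 0 < σ.card := Finset.card_pos.2 ⟨b, hb⟩
        omega
    · rw [cmapOf_contr_not_mem hb, bnd_single, one_smul, bndOf_card_le h1]
  · push_neg at h1
    have hrhs : cmap (contr a b) (bndOf σ)
        = ∑ v ∈ σ, ((-1:ℤ) ^ ((σ.filter (fun x => x < v)).card)) •
            cmapOf (contr a b) (σ.erase v) := by
      rw [bndOf_eq h1, map_sum]
      refine Finset.sum_congr rfl fun v hv => ?_
      rw [map_smul, cmap_single, one_smul]
    rw [hrhs]
    by_cases hb : b ∈ σ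
    · by_cases ha : a ∈ σ
      · -- collapsing simplex : both sides vanish
        rw [cmapOf_contr_both hne ha hb, map_zero]
        have hba : b ∈ σ.erase a := Finset.mem_erase.2 ⟨hne.symm, hb⟩
        rw [← Finset.add_sum_erase _ _ ha, ← Finset.add_sum_erase _ _ hba]
        have hz : ∑ v ∈ (σ.erase a).erase b,
            ((-1:ℤ) ^ ((σ.filter (fun x => x < v)).card)) •
              cmapOf (contr a b) (σ.erase v) = 0 := by
          refine Finset.sum_eq_zero fun v hv => ?_
          simp only [Finset.mem_erase] at hv
          rw [cmapOf_contr_both hne (Finset.mem_erase.2 ⟨fun h => hv.2.1 h.symm, ha⟩)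
            (Finset.mem_erase.2 ⟨fun h => hv.1 h.symm, hb⟩), smul_zero]
        rw [hz, add_zero]
        -- the two remaining terms cancel
        have hbea : b ∈ σ.erase a := hba
        have hanea : a ∉ σ.erase a := Finset.notMem_erase _ _
        rw [cmapOf_contr_mirror hne hanea hbea,
          cmapOf_contr_not_mem (Finset.notMem_erase _ _)]
        have hins : insert a ((σ.erase a).erase b) = σ.erase b := by
          rw [erase_comm']
          exact Finset.insert_erase (Finset.mem_erase.2 ⟨hne, ha⟩)
        have hbc : bcount a b (σ.erase a) = bcount a b σ := by
          rw [bcount, bcount, filter_card_erase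
            (fun x => min a b < x ∧ x < max a b) ha, if_neg not_betw_self_left, add_zero]
        rw [hins, smul_smul, hbc, ← add_smul]
        have hzero : (-1:ℤ)^((σ.filter (fun x => x < a)).card) * (-1)^(bcount a b σ)
            + (-1:ℤ)^((σ.filter (fun x => x < b)).card) = 0 := by
          have hsb := sign_both hne ha hb
          have hsq := negpow_mul_self ((σ.filter (fun x => x < a)).card)
          linear_combination ((-1:ℤ)^((σ.filter (fun x => x < a)).card)) * hsb
            - ((-1:ℤ)^((σ.filter (fun x => x < b)).card)) * hsq
        rw [hzero, zero_smul]
      · -- mirror simplex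
        rw [cmapOf_contr_mirror hne ha hb, map_smul, bnd_single, one_smul]
        have hanem : a ∉ σ.erase b := fun h => ha (Finset.mem_of_mem_erase h)
        have hcard' : (insert a (σ.erase b)).card = σ.card := by
          rw [Finset.card_insert_of_notMem hanem, Finset.card_erase_of_mem hb]
          have : 0 < σ.card := Finset.card_pos.2 ⟨b, hb⟩
          omega
        rw [bndOf_eq (by omega : 2 ≤ (insert a (σ.erase b)).card)]
        rw [Finset.sum_insert hanem, smul_add, Finset.smul_sum]
        conv_rhs => rw [← Finset.add_sum_erase _ _ hb]
        congr 1
        · -- head terms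
          rw [cmapOf_contr_not_mem (Finset.notMem_erase _ _),
            Finset.erase_insert hanem, smul_smul]
          congr 1
          exact sign_mirror_a hne ha hb
        · -- tail sums
          refine Finset.sum_congr rfl fun v hv => ?_
          simp only [Finset.mem_erase] at hv
          obtain ⟨hvb, hvσ⟩ := hv
          have hbev : b ∈ σ.erase v := Finset.mem_erase.2 ⟨Ne.symm hvb, hb⟩
          have haev : a ∉ σ.erase v := fun h => ha (Finset.mem_of_mem_erase h)
          rw [cmapOf_contr_mirror hne haev hbev]
          have hins : insert a ((σ.erase v).erase b) = (insert a (σ.erase b)).erase v := by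
            rw [erase_comm']
            have hva : v ≠ a := fun h => ha (h ▸ hvσ)
            rw [Finset.erase_insert_of_ne hva.symm]
          rw [hins, smul_smul, smul_smul]
          congr 1
          exact sign_mirror_v hne ha hb hvσ hvb
    · -- b not in σ : γ restricted is the identity
      rw [cmapOf_contr_not_mem hb, bnd_single, one_smul, bndOf_eq h1]
      refine Finset.sum_congr rfl fun v hv => ?_
      rw [cmapOf_contr_not_mem (fun h => hb (Finset.mem_of_mem_erase h))]

lemma bnd_cmap (hne : a ≠ b) (x : FChain V) :
    bnd (cmap (contr a b) x) = cmap (contr a b) (bnd x) := by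
  induction x using Finsupp.induction_linear with
  | zero => simp
  | add f g hf hg => simp [map_add, hf, hg]
  | single σ c =>
      rw [cmap_single, bnd_single, map_smul, map_smul, bnd_cmapOf hne]


lemma chains_eq_supported (K : SC V) (p : ℕ) :
    chains K p = Finsupp.supported ℤ ℤ {σ : Finset V | σ ∈ K.faces ∧ σ.card = p + 1} := by
  rw [chains, Finsupp.supported_eq_span_single]
  congr 1
  ext x
  constructor
  · rintro ⟨σ, h1, h2, rfl⟩
    exact ⟨σ, ⟨h1, h2⟩, rfl⟩
  · rintro ⟨σ, ⟨h1, h2⟩, rfl⟩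
    exact ⟨σ, h1, h2, rfl⟩

lemma mem_chains_iff {K : SC V} {p : ℕ} {x : FChain V} :
    x ∈ chains K p ↔ ∀ σ ∈ x.support, σ ∈ K.faces ∧ σ.card = p + 1 := by
  rw [chains_eq_supported, Finsupp.mem_supported]
  constructor
  · intro h σ hσ
    exact h hσ
  · intro h σ hσ
    exact h σ hσ

lemma single_mem_chains {K : SC V} {p : ℕ} {σ : Finset V} (h1 : σ ∈ K.faces)
    (h2 : σ.card = p + 1) (c : ℤ) : Finsupp.single σ c ∈ chains K p := by
  rw [mem_chains_iff]
  intro τ hτ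
  have := Finsupp.support_single_subset hτ
  simp only [Finset.mem_singleton] at this
  subst this
  exact ⟨h1, h2⟩

lemma bndOf_mem_chains {K : SC V} {p : ℕ} {σ : Finset V} (h : σ ∈ K.faces)
    (hc : σ.card = p + 2) : bndOf σ ∈ chains K p := by
  rw [bndOf_eq (by omega)]
  refine Submodule.sum_mem _ fun v hv => Submodule.smul_mem _ _ ?_
  refine single_mem_chains (K.down_closed σ h _ (Finset.erase_subset _ _) ?_) ?_ 1
  · rw [← Finset.card_pos, Finset.card_erase_of_mem hv]
    omega
  · rw [Finset.card_erase_of_mem hv]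
    omega

lemma bnd_mem_chains {K : SC V} {p : ℕ} {x : FChain V} (h : x ∈ chains K (p + 1)) :
    bnd x ∈ chains K p := by
  induction h using Submodule.span_induction with
  | mem y hy =>
      obtain ⟨σ, h1, h2, rfl⟩ := hy
      rw [bnd_single, one_smul]
      exact bndOf_mem_chains h1 (by omega)
  | zero => rw [map_zero]; exact Submodule.zero_mem _
  | add y z _ _ hy hz => rw [map_add]; exact Submodule.add_mem _ hy hz
  | smul c y _ hy => rw [map_smul]; exact Submodule.smul_mem _ _ hy

lemma cmap_mem_chains {K K' : SC V} (hne : a ≠ b)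
    (hK' : K'.faces = K.faces.image (Finset.image (contr a b)))
    {q : ℕ} {x : FChain V} (h : x ∈ chains K q) :
    cmap (contr a b) x ∈ chains K' q := by
  induction h using Submodule.span_induction with
  | mem y hy =>
      obtain ⟨σ, h1, h2, rfl⟩ := hy
      rw [cmap_single, one_smul]
      have himgK' : σ.image (contr a b) ∈ K'.faces := by
        rw [hK']
        exact Finset.mem_image_of_mem _ h1
      by_cases hb : b ∈ σ
      · by_cases ha : a ∈ σ
        · rw [cmapOf_contr_both hne ha hb]
          exact Submodule.zero_mem _
        · rw [cmapOf_contr_mirror hne ha hb]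
          refine Submodule.smul_mem _ _ (single_mem_chains ?_ ?_ 1)
          · rw [← image_contr_of_mem hb]
            exact himgK'
          · rw [Finset.card_insert_of_notMem (fun hx => ha (Finset.mem_of_mem_erase hx)),
              Finset.card_erase_of_mem hb]
            omega
      · rw [cmapOf_contr_not_mem hb]
        refine single_mem_chains ?_ h2 1
        rw [← image_contr_of_not_mem hb]
        exact himgK'
  | zero => rw [map_zero]; exact Submodule.zero_mem _
  | add y z _ _ hy hz => rw [map_add]; exact Submodule.add_mem _ hy hz
  | smul c y _ hy => rw [map_smul]; exact Submodule.smul_mem _ _ hy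

lemma cmap_lift {K K' : SC V} (hne : a ≠ b)
    (hK' : K'.faces = K.faces.image (Finset.image (contr a b)))
    {q : ℕ} {c' : FChain V} (h : c' ∈ chains K' q) :
    ∃ c, c ∈ chains K q ∧ cmap (contr a b) c = c' := by
  induction h using Submodule.span_induction with
  | mem y hy =>
      obtain ⟨τ', h1, h2, rfl⟩ := hy
      rw [hK', Finset.mem_image] at h1
      obtain ⟨τ, hτK, hτimg⟩ := h1
      by_cases hb : b ∈ τ
      · by_cases ha : a ∈ τ
        · -- collapsed face : use τ.erase b
          have himg : τ.image (contr a b) = τ.erase b := by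
            rw [image_contr_of_mem hb,
              Finset.insert_eq_self.2 (Finset.mem_erase.2 ⟨hne, ha⟩)]
          have hfK : τ.erase b ∈ K.faces := by
            refine K.down_closed τ hτK _ (Finset.erase_subset _ _) ?_
            rw [← Finset.card_pos, ← himg, hτimg, h2]
            omega
          refine ⟨Finsupp.single (τ.erase b) 1, single_mem_chains hfK ?_ 1, ?_⟩
          · rw [← himg, hτimg, h2]
          · rw [cmap_single, one_smul, cmapOf_contr_not_mem (Finset.notMem_erase _ _),
              ← himg, hτimg]
        · -- mirror face : sign-corrected lift
          refine ⟨((-1:ℤ)^(bcount a b τ)) • Finsupp.single τ 1, ?_, ?_⟩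
          · refine Submodule.smul_mem _ _ (single_mem_chains hτK ?_ 1)
            rw [← h2, ← hτimg, image_contr_of_mem hb,
              Finset.card_insert_of_notMem (fun hx => ha (Finset.mem_of_mem_erase hx)),
              Finset.card_erase_of_mem hb]
            have : 0 < τ.card := Finset.card_pos.2 ⟨b, hb⟩
            omega
          · rw [map_smul, cmap_single, one_smul, cmapOf_contr_mirror hne ha hb,
              smul_smul, negpow_mul_self, one_smul, ← image_contr_of_mem hb, hτimg]
      · have himg : τ.image (contr a b) = τ := image_contr_of_not_mem hb
        refine ⟨Finsupp.single τ 1, single_mem_chains hτK (by rw [← h2, ← hτimg, himg]) 1, ?_⟩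
        rw [cmap_single, one_smul, cmapOf_contr_not_mem hb, ← himg, hτimg]
  | zero => exact ⟨0, Submodule.zero_mem _, map_zero _⟩
  | add y z _ _ hy hz =>
      obtain ⟨cy, hcy, hcy'⟩ := hy
      obtain ⟨cz, hcz, hcz'⟩ := hz
      exact ⟨cy + cz, Submodule.add_mem _ hcy hcz, by rw [map_add, hcy', hcz']⟩
  | smul r y _ hy =>
      obtain ⟨cy, hcy, hcy'⟩ := hy
      exact ⟨r • cy, Submodule.smul_mem _ _ hcy, by rw [map_smul, hcy']⟩


lemma cmap_apply (f : V → V) (w : FChain V) (ρ : Finset V) :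
    cmap f w ρ = ∑ σ ∈ w.support, w σ * (cmapOf f σ) ρ := by
  rw [cmap, Finsupp.lsum_apply]
  simp only [Finsupp.sum]
  rw [Finset.sum_apply']
  refine Finset.sum_congr rfl fun σ _ => ?_
  rw [LinearMap.toSpanSingleton_apply, Finsupp.smul_apply, smul_eq_mul]

lemma bnd_apply (w : FChain V) (ρ : Finset V) :
    bnd w ρ = ∑ σ ∈ w.support, w σ * (bndOf σ) ρ := by
  rw [bnd, Finsupp.lsum_apply]
  simp only [Finsupp.sum]
  rw [Finset.sum_apply']
  refine Finset.sum_congr rfl fun σ _ => ?_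
  rw [LinearMap.toSpanSingleton_apply, Finsupp.smul_apply, smul_eq_mul]

lemma mirror_eq_iff (hne : a ≠ b) {σ ρ : Finset V} (hbσ : b ∈ σ) (haσ : a ∉ σ)
    (haρ : a ∈ ρ) (hbρ : b ∉ ρ) :
    insert a (σ.erase b) = ρ ↔ σ = insert b (ρ.erase a) := by
  constructor
  · rintro rfl
    rw [Finset.erase_insert (fun h => haσ (Finset.mem_of_mem_erase h)),
      Finset.insert_erase hbσ]
  · rintro rfl
    rw [Finset.erase_insert (fun h => hbρ (Finset.mem_of_mem_erase h)),
      Finset.insert_erase haρ]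

lemma cmapOf_apply_none (hne : a ≠ b) {σ ρ : Finset V} (haρ : a ∉ ρ) (hbρ : b ∉ ρ) :
    (cmapOf (contr a b) σ) ρ = if σ = ρ then 1 else 0 := by
  by_cases hb : b ∈ σ
  · have hne2 : σ ≠ ρ := by
      rintro rfl
      exact hbρ hb
    rw [if_neg hne2]
    by_cases ha : a ∈ σ
    · rw [cmapOf_contr_both hne ha hb]
      rfl
    · rw [cmapOf_contr_mirror hne ha hb, Finsupp.smul_apply, Finsupp.single_apply,
        if_neg ?_, smul_zero]
      intro h
      rw [← h] at haρ
      exact haρ (Finset.mem_insert_self a _)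
  · rw [cmapOf_contr_not_mem hb, Finsupp.single_apply]

lemma cmapOf_apply_mirror (hne : a ≠ b) {σ ρ : Finset V} (haρ : a ∈ ρ) (hbρ : b ∉ ρ) :
    (cmapOf (contr a b) σ) ρ = (if σ = ρ then 1 else 0)
      + (if σ = insert b (ρ.erase a) then (-1:ℤ)^(bcount a b σ) else 0) := by
  by_cases hb : b ∈ σ
  · have hne2 : σ ≠ ρ := by
      rintro rfl
      exact hbρ hb
    rw [if_neg hne2, zero_add]
    by_cases ha : a ∈ σ
    · rw [cmapOf_contr_both hne ha hb, if_neg, Finsupp.coe_zero, Pi.zero_apply]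
      intro h
      rw [h] at ha
      rcases Finset.mem_insert.1 ha with h1 | h1
      · exact hne h1
      · exact Finset.notMem_erase a ρ h1
    · rw [cmapOf_contr_mirror hne ha hb, Finsupp.smul_apply, Finsupp.single_apply]
      by_cases h : σ = insert b (ρ.erase a)
      · rw [if_pos ((mirror_eq_iff hne hb ha haρ hbρ).2 h), if_pos h, smul_eq_mul, mul_one]
      · rw [if_neg (fun hc => h ((mirror_eq_iff hne hb ha haρ hbρ).1 hc)), if_neg h, smul_zero]
  · have hne2 : σ ≠ insert b (ρ.erase a) := fun h => hb (h ▸ Finset.mem_insert_self b _)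
    rw [cmapOf_contr_not_mem hb, Finsupp.single_apply, if_neg hne2, add_zero]

lemma cmap_coeff_none (hne : a ≠ b) (w : FChain V) {ρ : Finset V}
    (haρ : a ∉ ρ) (hbρ : b ∉ ρ) : (cmap (contr a b) w) ρ = w ρ := by
  rw [cmap_apply]
  have hcongr : ∀ σ ∈ w.support, w σ * (cmapOf (contr a b) σ) ρ
      = if σ = ρ then w σ else 0 := by
    intro σ _
    rw [cmapOf_apply_none hne haρ hbρ]
    split_ifs <;> simp
  rw [Finset.sum_congr rfl hcongr, Finset.sum_ite_eq' w.support ρ (fun σ => w σ)]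
  split_ifs with h
  · rfl
  · exact (Finsupp.notMem_support_iff.1 h).symm

lemma cmap_coeff_mirror (hne : a ≠ b) (w : FChain V) {ρ : Finset V}
    (haρ : a ∈ ρ) (hbρ : b ∉ ρ) :
    (cmap (contr a b) w) ρ
      = w ρ + (-1:ℤ)^(bcount a b (insert b (ρ.erase a))) * w (insert b (ρ.erase a)) := by
  rw [cmap_apply]
  have hcongr : ∀ σ ∈ w.support, w σ * (cmapOf (contr a b) σ) ρ
      = (if σ = ρ then w σ else 0)
        + (if σ = insert b (ρ.erase a)
            then (-1:ℤ)^(bcount a b (insert b (ρ.erase a))) * w (insert b (ρ.erase a)) else 0) := by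
    intro σ _
    rw [cmapOf_apply_mirror hne haρ hbρ, mul_add]
    congr 1
    · split_ifs <;> simp
    · split_ifs with h
      · rw [h, mul_comm]
      · simp
  rw [Finset.sum_congr rfl hcongr, Finset.sum_add_distrib,
    Finset.sum_ite_eq' w.support ρ (fun σ => w σ),
    Finset.sum_ite_eq' w.support (insert b (ρ.erase a))
      (fun _ => (-1:ℤ)^(bcount a b (insert b (ρ.erase a))) * w (insert b (ρ.erase a)))]
  congr 1
  · split_ifs with h
    · rfl
    · exact (Finsupp.notMem_support_iff.1 h).symm
  · split_ifs with h
    · rfl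
    · rw [Finsupp.notMem_support_iff.1 h, mul_zero]

lemma bndOf_apply_erase {τ : Finset V} (h2 : 2 ≤ τ.card) {v : V} (hv : v ∈ τ) :
    (bndOf τ) (τ.erase v) = (-1:ℤ)^((τ.filter (fun x => x < v)).card) := by
  rw [bndOf_eq h2, Finset.sum_apply']
  rw [Finset.sum_eq_single_of_mem v hv]
  · rw [Finsupp.smul_apply, Finsupp.single_apply, if_pos rfl, smul_eq_mul, mul_one]
  · intro w hw hwv
    rw [Finsupp.smul_apply, Finsupp.single_apply, if_neg, smul_zero]
    intro hcontra
    have : v ∈ τ.erase w := Finset.mem_erase.2 ⟨fun h => hwv h.symm, hv⟩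
    rw [hcontra] at this
    exact Finset.notMem_erase v τ this

lemma bndOf_apply_zero {τ ρ : Finset V} (h : ∀ v ∈ τ, τ.erase v ≠ ρ) :
    (bndOf τ) ρ = 0 := by
  by_cases h2 : τ.card ≤ 1
  · rw [bndOf_card_le h2]
    rfl
  · rw [bndOf_eq (by omega), Finset.sum_apply']
    refine Finset.sum_eq_zero fun v hv => ?_
    rw [Finsupp.smul_apply, Finsupp.single_apply, if_neg (h v hv), smul_zero]


lemma sign_case3 (hne : a ≠ b) {ρ : Finset V} (ha : a ∉ ρ) (hb : b ∈ ρ) :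
    (-1:ℤ)^(((insert a ρ).filter (fun x => x < a)).card)
      * (-1:ℤ)^(((insert a ρ).filter (fun x => x < b)).card)
      = -(-1:ℤ)^(bcount a b ρ) := by
  have h := sign_both hne (Finset.mem_insert_self a ρ) (Finset.mem_insert_of_mem hb)
  rw [h]
  have hbc : bcount a b (insert a ρ) = bcount a b ρ := by
    rw [bcount, bcount, filter_card_insert _ ha, if_neg not_betw_self_left, add_zero]
  rw [hbc]

lemma link_face {K : SC V} (hne : a ≠ b) (hab : ({a, b} : Finset V) ∈ K.faces)
    {p : ℕ} (hpl : PLink K a b (p : ℤ)) {σ : Finset V} (hσK : σ ∈ K.faces)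
    (hcard : σ.card = p + 1) (hbσ : b ∈ σ) (haσ : a ∉ σ)
    (hmir : insert a (σ.erase b) ∈ K.faces) : insert a σ ∈ K.faces := by
  by_cases hp : p = 0
  · subst hp
    have hσb : σ = {b} := by
      rw [Finset.card_eq_one] at hcard
      obtain ⟨x, rfl⟩ := hcard
      rw [Finset.mem_singleton] at hbσ
      rw [hbσ]
    rw [hσb]
    exact hab
  · have hp1 : 1 ≤ p := by omega
    set ξ := σ.erase b with hξ
    have hξcard : ξ.card = p := by
      rw [hξ, Finset.card_erase_of_mem hbσ, hcard]
      omega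
    have hξne : ξ.Nonempty := by rw [← Finset.card_pos, hξcard]; omega
    have hξK : ξ ∈ K.faces := K.down_closed σ hσK ξ (Finset.erase_subset _ _) hξne
    have haξ : a ∉ ξ := fun h => haσ (Finset.mem_of_mem_erase h)
    have hbξ : b ∉ ξ := Finset.notMem_erase _ _
    have haK : ({a} : Finset V) ∈ K.faces := by
      refine K.down_closed _ hab {a} ?_ ⟨a, Finset.mem_singleton_self a⟩
      intro x hx
      rw [Finset.mem_singleton] at hx
      subst hx
      exact Finset.mem_insert_self x _
    have hbK : ({b} : Finset V) ∈ K.faces := by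
      refine K.down_closed _ hab {b} ?_ ⟨b, Finset.mem_singleton_self b⟩
      intro x hx
      rw [Finset.mem_singleton] at hx
      subst hx
      exact Finset.mem_insert_of_mem (Finset.mem_singleton_self x)
    have hstar : ∀ c : V, ({c} : Finset V) ∈ K.faces → c ∉ ξ →
        (∀ ρ₀ : Finset V, ρ₀ ∈ K.faces → c ∈ ρ₀ → ξ ⊆ ρ₀ → ξ ∈ linkV K c) := by
      intro c hcK hcξ ρ₀ hρ₀K hcρ₀ hξρ₀
      constructor
      · exact ⟨hξK, ρ₀, ⟨hρ₀K, {c}, rfl, Finset.singleton_subset_iff.2 hcρ₀⟩, hξρ₀⟩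
      · rintro ⟨-, σ₀, ⟨hσ₀K, e, he, hσ₀e⟩, hσ₀ξ⟩
        simp only [Set.mem_singleton_iff] at he
        subst he
        obtain ⟨x, hx⟩ := K.nonempty_of_mem σ₀ hσ₀K
        have hxc : x = c := Finset.mem_singleton.1 (hσ₀e hx)
        exact hcξ (hσ₀ξ (hxc ▸ hx))
    have hξa : ξ ∈ linkV K a := by
      refine hstar a haK haξ (insert a ξ) ?_ (Finset.mem_insert_self a ξ)
        (Finset.subset_insert a ξ)
      exact hmir
    have hξb : ξ ∈ linkV K b := by
      refine hstar b hbK hbξ σ ?_ hbσ ?_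
      · exact hσK
      · rw [hξ]; exact Finset.erase_subset _ _
    rcases hpl with h0 | ⟨-, hmain⟩
    · exfalso
      have : (0:ℤ) < (p:ℤ) := by exact_mod_cast hp1
      omega
    · have hlk := hmain ξ ⟨hξa, hξb⟩ (by rw [hξcard])
      obtain ⟨⟨-, ρ, ⟨hρK, e, he, heρ⟩, hξρ⟩, -⟩ := hlk
      simp only [Set.mem_singleton_iff] at he
      subst he
      have hsub : insert a σ ⊆ ρ := by
        intro x hx
        rcases Finset.mem_insert.1 hx with rfl | hx
        · exact heρ (Finset.mem_insert_self x _)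
        · rcases Finset.decidableMem x ξ with hxξ | hxξ
          · -- x ∉ ξ and x ∈ σ ⟹ x = b
            have hxb : x = b := by
              by_contra hxb
              exact hxξ (Finset.mem_erase.2 ⟨hxb, hx⟩)
            rw [hxb]
            exact heρ (Finset.mem_insert_of_mem (Finset.mem_singleton_self b))
          · exact hξρ hxξ
      exact K.down_closed ρ hρK _ hsub ⟨a, Finset.mem_insert_self a σ⟩


lemma kernel_bdry {K : SC V} (hne : a ≠ b) (hab : ({a, b} : Finset V) ∈ K.faces)
    {p : ℕ} (hpl : PLink K a b (p : ℤ)) {w : FChain V}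
    (hwc : w ∈ chains K p) (hw0 : bnd w = 0)
    (hwz : cmap (contr a b) w = 0) : w ∈ bdries K p := by
  classical
  have hsupp := mem_chains_iff.1 hwc
  set B := w.support.filter (fun σ => b ∈ σ ∧ a ∉ σ) with hB
  have hBfacts : ∀ σ ∈ B, σ ∈ K.faces ∧ σ.card = p + 1 ∧ b ∈ σ ∧ a ∉ σ := by
    intro σ hσ
    rw [hB, Finset.mem_filter] at hσ
    exact ⟨(hsupp σ hσ.1).1, (hsupp σ hσ.1).2, hσ.2.1, hσ.2.2⟩
  have hBmem : ∀ σ : Finset V, b ∈ σ → a ∉ σ → σ ∉ B → w σ = 0 := by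
    intro σ hbσ haσ hσB
    by_contra h0
    exact hσB (Finset.mem_filter.2 ⟨Finsupp.mem_support_iff.2 h0, hbσ, haσ⟩)
  -- mirrors of members of B are faces of K
  have hmirror : ∀ σ ∈ B, insert a (σ.erase b) ∈ K.faces := by
    intro σ hσ
    obtain ⟨hσK, hσc, hbσ, haσ⟩ := hBfacts σ hσ
    have haρ : a ∈ insert a (σ.erase b) := Finset.mem_insert_self _ _
    have hbρ : b ∉ insert a (σ.erase b) := by
      intro h
      rcases Finset.mem_insert.1 h with h | h
      · exact hne h.symm
      · exact Finset.notMem_erase b σ h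
    have hco := cmap_coeff_mirror hne w haρ hbρ
    rw [hwz] at hco
    have hback : insert b ((insert a (σ.erase b)).erase a) = σ := by
      rw [Finset.erase_insert (fun h => haσ (Finset.mem_of_mem_erase h)),
        Finset.insert_erase hbσ]
    rw [hback] at hco
    have hwσ : w σ ≠ 0 := Finsupp.mem_support_iff.1 (Finset.mem_filter.1 hσ).1
    have hwρ : w (insert a (σ.erase b)) ≠ 0 := by
      intro h0
      rw [h0, zero_add] at hco
      simp only [Finsupp.coe_zero, Pi.zero_apply] at hco
      rcases mul_eq_zero.1 hco.symm with h | h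
      · exact pow_ne_zero _ (by norm_num : (-1:ℤ) ≠ 0) h
      · exact hwσ h
    exact (hsupp _ (Finsupp.mem_support_iff.2 hwρ)).1
  set u := ∑ σ ∈ B, (w σ * (-1:ℤ)^(((insert a σ).filter (fun x => x < a)).card)) •
      Finsupp.single (insert a σ) (1:ℤ) with hu
  have hfaceu : ∀ σ ∈ B, insert a σ ∈ K.faces := by
    intro σ hσ
    obtain ⟨hσK, hσc, hbσ, haσ⟩ := hBfacts σ hσ
    exact link_face hne hab hpl hσK hσc hbσ haσ (hmirror σ hσ)
  have hcardu : ∀ σ ∈ B, (insert a σ).card = p + 2 := by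
    intro σ hσ
    obtain ⟨-, hσc, -, haσ⟩ := hBfacts σ hσ
    rw [Finset.card_insert_of_notMem haσ, hσc]
  have huc : u ∈ chains K (p+1) := by
    rw [hu]
    exact Submodule.sum_mem _ fun σ hσ => Submodule.smul_mem _ _
      (single_mem_chains (hfaceu σ hσ) (hcardu σ hσ) 1)
  have hbu : ∀ ρ : Finset V, (bnd u) ρ = ∑ σ ∈ B,
      (w σ * (-1:ℤ)^(((insert a σ).filter (fun x => x < a)).card))
        * (bndOf (insert a σ)) ρ := by
    intro ρ
    rw [hu, map_sum, Finset.sum_apply']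
    refine Finset.sum_congr rfl fun σ hσ => ?_
    rw [map_smul, bnd_single, one_smul, Finsupp.smul_apply, smul_eq_mul]
  set r := w - bnd u with hr
  have hrz : ∀ ρ : Finset V, ¬(a ∈ ρ ∧ b ∈ ρ) → r ρ = 0 := by
    intro ρ hρ
    rw [hr, Finsupp.sub_apply]
    by_cases haρ : a ∈ ρ
    · have hbρ : b ∉ ρ := fun h => hρ ⟨haρ, h⟩
      set ρt := insert b (ρ.erase a) with hρt
      have hbρt : b ∈ ρt := Finset.mem_insert_self _ _
      have haρt : a ∉ ρt := by
        rw [hρt]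
        intro h
        rcases Finset.mem_insert.1 h with h | h
        · exact hne h
        · exact Finset.notMem_erase a ρ h
      have hco := cmap_coeff_mirror hne w haρ hbρ
      rw [hwz] at hco
      simp only [Finsupp.coe_zero, Pi.zero_apply] at hco
      have hbndu : (bnd u) ρ = if ρt ∈ B then
          (w ρt * (-1:ℤ)^(((insert a ρt).filter (fun x => x < a)).card))
            * (-1:ℤ)^(((insert a ρt).filter (fun x => x < b)).card) else 0 := by
        rw [hbu ρ]
        have hterm : ∀ σ ∈ B,
            (w σ * (-1:ℤ)^(((insert a σ).filter (fun x => x < a)).card))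
              * (bndOf (insert a σ)) ρ
            = if σ = ρt then
                (w ρt * (-1:ℤ)^(((insert a ρt).filter (fun x => x < a)).card))
                  * (-1:ℤ)^(((insert a ρt).filter (fun x => x < b)).card) else 0 := by
          intro σ hσ
          obtain ⟨-, hσc, hbσ, haσ⟩ := hBfacts σ hσ
          have h2 : 2 ≤ (insert a σ).card := by rw [hcardu σ hσ]; omega
          have hbins : b ∈ insert a σ := Finset.mem_insert_of_mem hbσ
          have herb : (insert a σ).erase b = insert a (σ.erase b) :=
            Finset.erase_insert_of_ne hne
          by_cases hσρt : σ = ρt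
          · have hmi : insert a (σ.erase b) = ρ :=
              (mirror_eq_iff hne hbσ haσ haρ hbρ).2 (by rw [hσρt, hρt])
            rw [if_pos hσρt, ← hmi, ← herb, bndOf_apply_erase h2 hbins, hσρt]
          · rw [if_neg hσρt]
            rw [bndOf_apply_zero, mul_zero]
            intro v hv hcontra
            by_cases hvb : v = b
            · subst hvb
              rw [herb] at hcontra
              exact hσρt ((mirror_eq_iff hne hbσ haσ haρ hbρ).1 hcontra)
            · have : b ∈ (insert a σ).erase v := Finset.mem_erase.2 ⟨Ne.symm hvb, hbins⟩
              rw [hcontra] at this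
              exact hbρ this
        rw [Finset.sum_congr rfl hterm, Finset.sum_ite_eq' B ρt]
      rw [hbndu]
      by_cases hρtB : ρt ∈ B
      · rw [if_pos hρtB]
        have hs := sign_case3 hne haρt hbρt
        rw [← hρt] at hco
        linear_combination -hco - w ρt * hs
      · rw [if_neg hρtB]
        have hwρt : w ρt = 0 := hBmem ρt hbρt haρt hρtB
        rw [← hρt] at hco
        rw [hwρt, mul_zero, add_zero] at hco
        rw [← hco, sub_zero]
    · by_cases hbρ : b ∈ ρ
      · have hbndu2 : (bnd u) ρ = if ρ ∈ B then w ρ else 0 := by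
          rw [hbu ρ]
          have hterm : ∀ σ ∈ B,
              (w σ * (-1:ℤ)^(((insert a σ).filter (fun x => x < a)).card))
                * (bndOf (insert a σ)) ρ
              = if σ = ρ then w ρ else 0 := by
            intro σ hσ
            obtain ⟨-, hσc, hbσ, haσ⟩ := hBfacts σ hσ
            have h2 : 2 ≤ (insert a σ).card := by rw [hcardu σ hσ]; omega
            have hains : a ∈ insert a σ := Finset.mem_insert_self _ _
            have hera : (insert a σ).erase a = σ := Finset.erase_insert haσ
            by_cases hσρ : σ = ρ
            · subst hσρ
              rw [if_pos rfl]
              have happ := bndOf_apply_erase h2 hains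
              rw [hera] at happ
              rw [happ, mul_assoc, negpow_mul_self, mul_one]
            · rw [if_neg hσρ, bndOf_apply_zero, mul_zero]
              intro v hv hcontra
              by_cases hva : v = a
              · subst hva
                rw [hera] at hcontra
                exact hσρ hcontra
              · have : a ∈ (insert a σ).erase v := Finset.mem_erase.2 ⟨Ne.symm hva, hains⟩
                rw [hcontra] at this
                exact haρ this
          rw [Finset.sum_congr rfl hterm, Finset.sum_ite_eq' B ρ]
        rw [hbndu2]
        by_cases hρB : ρ ∈ B
        · rw [if_pos hρB, sub_self]
        · rw [if_neg hρB, hBmem ρ hbρ haρ hρB, sub_zero]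
      · have hco := cmap_coeff_none hne w haρ hbρ
        rw [hwz] at hco
        simp only [Finsupp.coe_zero, Pi.zero_apply] at hco
        have hbndu3 : (bnd u) ρ = 0 := by
          rw [hbu ρ]
          refine Finset.sum_eq_zero fun σ hσ => ?_
          obtain ⟨-, -, hbσ, haσ⟩ := hBfacts σ hσ
          rw [bndOf_apply_zero, mul_zero]
          intro v hv hcontra
          by_cases hva : v = a
          · have : b ∈ (insert a σ).erase v :=
              Finset.mem_erase.2 ⟨by rw [hva]; exact Ne.symm hne, Finset.mem_insert_of_mem hbσ⟩
            rw [hcontra] at this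
            exact hbρ this
          · have : a ∈ (insert a σ).erase v :=
              Finset.mem_erase.2 ⟨Ne.symm hva, Finset.mem_insert_self _ _⟩
            rw [hcontra] at this
            exact haρ this
        rw [hbndu3, ← hco, sub_zero]
  have hr0 : bnd r = 0 := by
    rw [hr, map_sub, hw0, bnd_bnd, zero_sub, neg_zero]
  have hrzero : r = 0 := by
    ext ρ
    simp only [Finsupp.coe_zero, Pi.zero_apply]
    by_cases hρ : a ∈ ρ ∧ b ∈ ρ
    · obtain ⟨haρ, hbρ⟩ := hρ
      set η := ρ.erase a with hη
      have haη : a ∉ η := Finset.notMem_erase _ _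
      have hins : insert a η = ρ := Finset.insert_erase haρ
      have hcol : ∀ σ ∈ r.support, a ∈ σ ∧ b ∈ σ := by
        intro σ hσ
        by_contra hc
        exact (Finsupp.mem_support_iff.1 hσ) (hrz σ hc)
      have hterm : ∀ σ ∈ r.support, r σ * (bndOf σ) η
          = if σ = ρ then r ρ * (-1:ℤ)^((ρ.filter (fun x => x < a)).card) else 0 := by
        intro σ hσ
        obtain ⟨haσ, hbσ⟩ := hcol σ hσ
        have h2 : 2 ≤ σ.card := by
          have := Finset.one_lt_card.2 ⟨a, haσ, b, hbσ, hne⟩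
          omega
        by_cases hσρ : σ = ρ
        · subst hσρ
          rw [if_pos rfl, hη, bndOf_apply_erase h2 haσ]
        · rw [if_neg hσρ, bndOf_apply_zero, mul_zero]
          intro v hv hcontra
          by_cases hva : v = a
          · subst hva
            apply hσρ
            rw [← hins, ← hcontra, Finset.insert_erase haσ]
          · have : a ∈ σ.erase v := Finset.mem_erase.2 ⟨Ne.symm hva, haσ⟩
            rw [hcontra] at this
            exact haη this
      have hzero : (bnd r) η = 0 := by rw [hr0]; rfl
      rw [bnd_apply, Finset.sum_congr rfl hterm, Finset.sum_ite_eq' r.support ρ] at hzero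
      by_cases hρs : ρ ∈ r.support
      · rw [if_pos hρs] at hzero
        rcases mul_eq_zero.1 hzero with h | h
        · exact h
        · exact absurd h (pow_ne_zero _ (by norm_num : (-1:ℤ) ≠ 0))
      · exact Finsupp.notMem_support_iff.1 hρs
    · exact hrz ρ hρ
  refine Submodule.mem_map.2 ⟨u, huc, ?_⟩
  have h0 : w - bnd u = 0 := hrzero
  have := sub_eq_zero.1 h0
  exact this.symm

end Aux
-- AUX END

/-- if the edge `ab` satisfies the `p`-link condition, the homomorphism
induced on `p`-th homology by the edge contraction of `ab` is injective. -/
theorem statement2 (K K' : SC V) (a b : V) (hne : a ≠ b)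
    (hab : ({a, b} : Finset V) ∈ K.faces)
    (hK' : K'.faces = K.faces.image (Finset.image (contr a b)))
    (p : ℕ) (hpl : PLink K a b (p : ℤ))
    (φ : Hmlgy K p →ₗ[ℤ] Hmlgy K' p)
    (hφ : ∀ (z : FChain V) (hz : z ∈ cycles K p)
        (hz' : cmap (contr a b) z ∈ cycles K' p),
      φ (HmlgyMk K p z hz) = HmlgyMk K' p (cmap (contr a b) z) hz') :
    Function.Injective φ := by
  refine (injective_iff_map_eq_zero φ).2 ?_
  intro x hx
  obtain ⟨⟨z, hz⟩, rfl⟩ := Submodule.Quotient.mk_surjective _ x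
  have hz1 : z ∈ chains K p := hz.1
  have hz2 : bnd z = 0 := hz.2
  have hz' : cmap (contr a b) z ∈ cycles K' p := by
    refine Submodule.mem_inf.2 ⟨cmap_mem_chains hne hK' hz1, LinearMap.mem_ker.2 ?_⟩
    rw [bnd_cmap hne, hz2, map_zero]
  have hphi := hφ z hz hz'
  have h0 : HmlgyMk K' p (cmap (contr a b) z) hz' = 0 := by
    rw [← hphi]
    exact hx
  rw [HmlgyMk, Submodule.Quotient.mk_eq_zero] at h0
  have hbd : cmap (contr a b) z ∈ bdries K' p := by
    simpa using h0
  obtain ⟨c', hc', hcb⟩ := Submodule.mem_map.1 hbd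
  obtain ⟨c, hcK, hcmap⟩ := cmap_lift hne hK' hc'
  set w := z - bnd c with hw
  have hwchains : w ∈ chains K p := Submodule.sub_mem _ hz1 (bnd_mem_chains hcK)
  have hw0 : bnd w = 0 := by
    rw [hw, map_sub, hz2, bnd_bnd, sub_zero]
  have hwz : cmap (contr a b) w = 0 := by
    rw [hw, map_sub, ← bnd_cmap hne, hcmap, hcb, sub_self]
  have hwb := kernel_bdry hne hab hpl hwchains hw0 hwz
  have hzb : z ∈ bdries K p := by
    have hzw : z = w + bnd c := by rw [hw, sub_add_cancel]
    rw [hzw]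
    exact Submodule.add_mem _ hwb (Submodule.mem_map.2 ⟨c, hcK, rfl⟩)
  rw [Submodule.Quotient.mk_eq_zero]
  simpa using hzb

end ECpaper
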